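/- Let Π be uniform on a finite set S and let p ∈ [0,1] with p·|S| an integer. Let F be the family of all functions h: universe → [0,1] with E_{Z∼Π}[h(Z)] = p. For any other uniform distribution Π' on a finite set S' with |S'| = |S|, the minimum over h ∈ F of E_{Z∼Π'}[h(Z)] is at least max(p − (1 − |S∩S'|/|S|), 0). -/

import Mathlib

/-- Variational lower bound: any `[0,1]`-valued `h` with mean `p` under
the uniform distribution on `S` has mean at least `max(p − (1 − |S∩S'|/|S|), 0)` under
the uniform distribution on `S'` when `|S'| = |S|`. -/
theorem variational_lower_bound {α : Type*} [DecidableEq α]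
    (S S' : Finset α) (hS : S.Nonempty) (hS' : S'.Nonempty)
    (hcard : S'.card = S.card)
    (p : ℝ) (hp : p ∈ Set.Icc (0 : ℝ) 1) (hint : ∃ k : ℕ, p * (S.card : ℝ) = (k : ℝ))
    (h : α → ℝ) (hh : ∀ z, h z ∈ Set.Icc (0 : ℝ) 1)
    (hmean : (∑ z ∈ S, h z) / (S.card : ℝ) = p) :
    (∑ z ∈ S', h z) / (S'.card : ℝ)
      ≥ max (p - (1 - ((S ∩ S').card : ℝ) / (S.card : ℝ))) 0 := by
  have hn : (0:ℝ) < (S.card : ℝ) := by exact_mod_cast Finset.card_pos.mpr hS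
  have hsum_nonneg : (0:ℝ) ≤ ∑ z ∈ S', h z :=
    Finset.sum_nonneg fun z _ => (hh z).1
  rw [ge_iff_le, max_le_iff]
  constructor
  · -- main bound
    have h1 : ∑ z ∈ S ∩ S', h z ≤ ∑ z ∈ S', h z :=
      Finset.sum_le_sum_of_subset_of_nonneg (Finset.inter_subset_right)
        (fun z _ _ => (hh z).1)
    have hsplit : ∑ z ∈ S, h z = ∑ z ∈ S ∩ S', h z + ∑ z ∈ S \ S', h z := by
      rw [← Finset.sum_inter_add_sum_sdiff S S' h]
    have h2 : ∑ z ∈ S \ S', h z ≤ ((S \ S').card : ℝ) := by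
      calc ∑ z ∈ S \ S', h z ≤ ∑ _z ∈ S \ S', (1:ℝ) :=
            Finset.sum_le_sum fun z _ => (hh z).2
        _ = ((S \ S').card : ℝ) := by simp
    have hdiffcard : ((S \ S').card : ℝ) = (S.card : ℝ) - ((S ∩ S').card : ℝ) := by
      have := Finset.card_sdiff_add_card_inter S S'
      have : (S \ S').card + (S ∩ S').card = S.card := this
      push_cast [← this]
      ring
    have hS2 : ∑ z ∈ S, h z = p * (S.card : ℝ) := by
      field_simp at hmean
      linarith [hmean]
    have key : p * (S.card : ℝ) - ((S.card : ℝ) - ((S ∩ S').card : ℝ)) ≤ ∑ z ∈ S', h z := by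
      rw [← hS2]
      linarith [hsplit, h1, h2, hdiffcard]
    rw [hcard, le_div_iff₀ hn]
    have : (p - (1 - ((S ∩ S').card : ℝ) / (S.card : ℝ))) * (S.card : ℝ)
        = p * (S.card : ℝ) - ((S.card : ℝ) - ((S ∩ S').card : ℝ)) := by
      rw [sub_mul, sub_mul, one_mul, div_mul_cancel₀ _ hn.ne']
    linarith [key, this.le]
  · exact div_nonneg hsum_nonneg (by exact_mod_cast Nat.zero_le _)
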